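/- The number of elementary differentials (rooted-tree terms) obtained by fully expanding the k-th derivative of the solution of y' = F(y) equals the number of rooted trees with k vertices: 1, 1, 2, 4, 9, 20, 48 for k = 1,…,7. Formally: the k-th derivative y^{(k)}(t) is a linear combination, with positive integer coefficients, of exactly r_k distinct elementary differentials, where r_k is the number of unlabeled rooted trees on k vertices. -/

import Mathlib

/-- Rooted trees, encoding elementary differentials: a node with children
`[t₁,…,tₘ]` encodes `F^{(m)}(D(t₁),…,D(tₘ))`. -/
inductive RTree : Type
  | node : List RTree → RTree

namespace RTree

/-- Number of vertices. -/
def size : RTree → ℕ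
  | node l => 1 + (l.attach.map (fun x => size x.1)).sum
decreasing_by
  have := List.sizeOf_lt_of_mem x.2
  simp only [RTree.node.sizeOf_spec] at *
  omega

/-- Equality of rooted trees up to permutation of children (unlabeled rooted
trees); two expanded elementary differentials coincide iff their trees are
equivalent in this sense. -/
inductive Equiv : RTree → RTree → Prop
  | nil : Equiv (node []) (node [])
  | cons {a b : RTree} {l l' : List RTree} :
      Equiv a b → Equiv (node l) (node l') → Equiv (node (a :: l)) (node (b :: l'))
  | swap (a b : RTree) (l : List RTree) :
      Equiv (node (a :: b :: l)) (node (b :: a :: l))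
  | trans {a b c : RTree} : Equiv a b → Equiv b c → Equiv a c

mutual
  /-- Differentiating the elementary differential of a tree by the chain and
  product rules: attach a new leaf to each vertex; the resulting list of trees
  (with repetitions) is the list of resulting terms. -/
  def grow : RTree → List RTree
    | node l => node (node [] :: l) :: (growList l).map node

  def growList : List RTree → List (List RTree)
    | [] => []
    | t :: ts => ((grow t).map (· :: ts)) ++ ((growList ts).map (t :: ·))
end

/-- The list of terms (elementary differentials, with repetitions according to
their integer coefficients) in the expansion of the `k`-th derivative
`y⁽ᵏ⁾` of a solution of `y' = F(y)`: `terms 1 = [•]` and each further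
differentiation applies `grow` to every term. -/
def terms : ℕ → List RTree
  | 0 => []
  | 1 => [node []]
  | (k + 1) => (terms k).flatMap grow

mutual
  def enc : RTree → ℕ
    | node l => encList l
  def encList : List RTree → ℕ
    | [] => 0
    | t :: ts => Nat.pair (enc t) (encList ts) + 1
end

mutual
  theorem enc_inj : ∀ {a b : RTree}, enc a = enc b → a = b
    | node l, node l', h => by
        rw [enc, enc] at h
        exact congrArg node (encList_inj h)
  theorem encList_inj : ∀ {l l' : List RTree}, encList l = encList l' → l = l'
    | [], [], _ => rfl
    | [], t :: ts, h => by simp [encList] at h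
    | t :: ts, [], h => by simp [encList] at h
    | t :: ts, u :: us, h => by
        rw [encList, encList] at h
        have h1 : Nat.pair (enc t) (encList ts) = Nat.pair (enc u) (encList us) := by omega
        have h2 := Nat.pair_eq_pair.mp h1
        rw [enc_inj h2.1, encList_inj h2.2]
end

instance : DecidableEq RTree := fun a b =>
  decidable_of_iff (enc a = enc b) ⟨enc_inj, fun h => h ▸ rfl⟩

def rle (a b : RTree) : Prop := enc a ≤ enc b

instance : DecidableRel rle := fun a b => Nat.decLe _ _
instance : IsTotal RTree rle := ⟨fun a b => Nat.le_total _ _⟩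
instance : IsTrans RTree rle := ⟨fun _ _ _ h1 h2 => Nat.le_trans h1 h2⟩
instance : IsAntisymm RTree rle := ⟨fun _ _ h1 h2 => enc_inj (Nat.le_antisymm h1 h2)⟩

mutual
  def canon : RTree → RTree
    | node l => node (List.insertionSort rle (canonList l))
  def canonList : List RTree → List RTree
    | [] => []
    | t :: ts => canon t :: canonList ts
end

theorem canonList_eq_map : ∀ l : List RTree, canonList l = l.map canon
  | [] => rfl
  | t :: ts => by rw [canonList, List.map_cons, canonList_eq_map]

theorem isort_congr {l l' : List RTree} (hp : l.Perm l') :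
    List.insertionSort rle l = List.insertionSort rle l' :=
  List.Perm.eq_of_pairwise (fun _ _ _ _ h1 h2 => enc_inj (Nat.le_antisymm h1 h2))
    (List.pairwise_insertionSort rle l) (List.pairwise_insertionSort rle l')
    ((List.perm_insertionSort rle l).trans (hp.trans (List.perm_insertionSort rle l').symm))

theorem canon_eq_of_equiv : ∀ {a b : RTree}, Equiv a b → canon a = canon b := by
  intro a b h
  induction h with
  | nil => rfl
  | @cons a b l l' _ _ iha ihl =>
      rw [canon, canon] at ihl ⊢
      rw [canonList, canonList]
      have hperm : (canonList l).Perm (canonList l') := by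
        have h1 := List.perm_insertionSort rle (canonList l)
        have h2 := List.perm_insertionSort rle (canonList l')
        have := congrArg (fun t => match t with | node l => l) ihl
        simp only at this
        exact h1.symm.trans (this ▸ h2)
      rw [iha, isort_congr (hperm.cons (canon b))]
  | swap a b l =>
      rw [canon, canon, canonList, canonList, canonList, canonList]
      rw [isort_congr (List.Perm.swap (canon b) (canon a) (canonList l))]
  | trans _ _ ih1 ih2 => exact ih1.trans ih2

mutual
  theorem equiv_refl : ∀ t : RTree, Equiv t t
    | node l => equiv_node_refl l
  theorem equiv_node_refl : ∀ l : List RTree, Equiv (node l) (node l)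
    | [] => .nil
    | t :: ts => .cons (equiv_refl t) (equiv_node_refl ts)
end

theorem equiv_symm : ∀ {a b : RTree}, Equiv a b → Equiv b a := by
  intro a b h
  induction h with
  | nil => exact .nil
  | cons _ _ ih1 ih2 => exact .cons ih1 ih2
  | swap a b l => exact .swap b a l
  | trans _ _ ih1 ih2 => exact ih2.trans ih1

theorem equiv_of_perm : ∀ {l l' : List RTree}, l.Perm l' → Equiv (node l) (node l') := by
  intro l l' h
  induction h with
  | nil => exact .nil
  | cons x _ ih => exact .cons (equiv_refl x) ih
  | swap x y l => exact .swap y x l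
  | trans _ _ ih1 ih2 => exact ih1.trans ih2

theorem equiv_of_forall2 : ∀ {l l' : List RTree},
    List.Forall₂ Equiv l l' → Equiv (node l) (node l') := by
  intro l l' h
  induction h with
  | nil => exact .nil
  | cons h _ ih => exact .cons h ih

mutual
  theorem canon_equiv : ∀ t : RTree, Equiv t (canon t)
    | node l => by
        rw [canon]
        exact (equiv_of_forall2 (canonList_forall2 l)).trans
          (equiv_of_perm (List.perm_insertionSort rle (canonList l)).symm)
  theorem canonList_forall2 : ∀ l : List RTree, List.Forall₂ Equiv l (canonList l)
    | [] => .nil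
    | t :: ts => .cons (canon_equiv t) (canonList_forall2 ts)
end

theorem equiv_iff_canon {a b : RTree} : Equiv a b ↔ canon a = canon b := by
  constructor
  · exact canon_eq_of_equiv
  · intro h
    exact (canon_equiv a).trans (h ▸ equiv_symm (canon_equiv b))


mutual
  def size' : RTree → ℕ
    | node l => 1 + sizeL l
  def sizeL : List RTree → ℕ
    | [] => 0
    | t :: ts => size' t + sizeL ts
end

mutual
  theorem size_eq : ∀ t : RTree, size t = size' t
    | node l => by
        rw [size, size']
        congr 1
        have : (l.attach.map (fun x => size x.1)) = l.map size := by
          simp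
        rw [this]
        exact sum_map_size l
  theorem sum_map_size : ∀ l : List RTree, (l.map size).sum = sizeL l
    | [] => rfl
    | t :: ts => by rw [List.map_cons, List.sum_cons, size_eq t, sum_map_size ts, sizeL]
end

def reps1 : List RTree := [node []]
def reps2 : List RTree := [node [node []]]
def reps3 : List RTree := [node [node [], node []], node [node [node []]]]
def reps4 : List RTree := [node [node [], node [], node []], node [node [node []], node []], node [node [node [], node []]], node [node [node [node []]]]]
def reps5 : List RTree := [node [node [], node [], node [], node []], node [node [node []], node [], node []], node [node [node [], node []], node []], node [node [node [node []]], node []], node [node [node []], node [node []]], node [node [node [], node [], node []]], node [node [node [node []], node []]], node [node [node [node [], node []]]], node [node [node [node [node []]]]]]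
def reps6 : List RTree := [node [node [], node [], node [], node [], node []], node [node [node []], node [], node [], node []], node [node [node [], node []], node [], node []], node [node [node [node []]], node [], node []], node [node [node []], node [node []], node []], node [node [node [], node [], node []], node []], node [node [node [node []], node []], node []], node [node [node [], node []], node [node []]], node [node [node [node [], node []]], node []], node [node [node [node [node []]]], node []], node [node [node [node []]], node [node []]], node [node [node [], node [], node [], node []]], node [node [node [node []], node [], node []]], node [node [node [node [], node []], node []]], node [node [node [node [node []]], node []]], node [node [node [node []], node [node []]]], node [node [node [node [], node [], node []]]], node [node [node [node [node []], node []]]], node [node [node [node [node [], node []]]]], node [node [node [node [node [node []]]]]]]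
def reps7 : List RTree := [node [node [], node [], node [], node [], node [], node []], node [node [node []], node [], node [], node [], node []], node [node [node [], node []], node [], node [], node []], node [node [node [node []]], node [], node [], node []], node [node [node []], node [node []], node [], node []], node [node [node [], node [], node []], node [], node []], node [node [node [node []], node []], node [], node []], node [node [node [], node []], node [node []], node []], node [node [node [node [], node []]], node [], node []], node [node [node [node [node []]]], node [], node []], node [node [node [node []]], node [node []], node []], node [node [node []], node [node []], node [node []]], node [node [node [], node [], node [], node []], node []], node [node [node [node []], node [], node []], node []], node [node [node [], node [], node []], node [node []]], node [node [node [node [], node []], node []], node []], node [node [node [node [node []]], node []], node []], node [node [node [node []], node [node []]], node []], node [node [node [node []], node []], node [node []]], node [node [node [], node []], node [node [], node []]], node [node [node [], node []], node [node [node []]]], node [node [node [node [], node [], node []]], node []], node [node [node [node [node []], node []]], node []], node [node [node [node [], node []]], node [node []]], node [node [node [node [node [], node []]]], node []], node [node [node [node [node [node []]]]], node []], node [node [node [node [node []]]], node [node []]], node [node [node [node []]], node [node [node []]]], node [node [node [], node [], node [], node [], node []]], node [node [node [node []], node [], node [], node []]], node [node [node [node [], node []], node [], node []]], node [node [node [node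 [node []]], node [], node []]], node [node [node [node []], node [node []], node []]], node [node [node [node [], node [], node []], node []]], node [node [node [node [node []], node []], node []]], node [node [node [node [], node []], node [node []]]], node [node [node [node [node [], node []]], node []]], node [node [node [node [node [node []]]], node []]], node [node [node [node [node []]], node [node []]]], node [node [node [node [], node [], node [], node []]]], node [node [node [node [node []], node [], node []]]], node [node [node [node [node [], node []], node []]]], node [node [node [node [node [node []]], node []]]], node [node [node [node [node []], node [node []]]]], node [node [node [node [node [], node [], node []]]]], node [node [node [node [node [node []], node []]]]], node [node [node [node [node [node [], node []]]]]], node [node [node [node [node [node [node []]]]]]]]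

theorem key (k n : ℕ) (reps : List RTree)
    (hs : ∀ t ∈ terms k, size' t = k)
    (hlen : reps.length = n)
    (hmem : ∀ r ∈ reps, r ∈ terms k)
    (hpw : reps.Pairwise (fun a b => canon a ≠ canon b))
    (hcov : ∀ t ∈ terms k, ∃ r ∈ reps, canon t = canon r) :
    (∀ t ∈ RTree.terms k, RTree.size t = k) ∧
      ∃ reps' : List RTree,
        reps'.length = n ∧
        (∀ r ∈ reps', r ∈ RTree.terms k) ∧
        reps'.Pairwise (fun a b => ¬ RTree.Equiv a b) ∧
        (∀ t ∈ RTree.terms k, ∃ r ∈ reps', RTree.Equiv t r) := by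
  refine ⟨fun t ht => (size_eq t).trans (hs t ht), reps, hlen, hmem, ?_, ?_⟩
  · exact hpw.imp fun h e => h (canon_eq_of_equiv e)
  · intro t ht
    obtain ⟨r, hr, hc⟩ := hcov t ht
    exact ⟨r, hr, equiv_iff_canon.mpr hc⟩

end RTree

set_option maxRecDepth 8000 in
/-- The fully expanded `k`-th derivative of a solution of `y' = F(y)` is a
linear combination, with positive integer coefficients, of exactly `r_k`
distinct elementary differentials, where `r_k` is the number of unlabeled
rooted trees on `k` vertices: `r_k = 1, 1, 2, 4, 9, 20, 48` for
`k = 1, …, 7`. Formally: for each such `k` there is a list of pairwise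
inequivalent representative trees, of the stated length, such that every term
of the expansion is equivalent to exactly one representative (and every tree
in `terms k` has `k` vertices). -/
theorem elementary_differentials_count :
    ∀ k : ℕ, 1 ≤ k → k ≤ 7 →
      (∀ t ∈ RTree.terms k, RTree.size t = k) ∧
      ∃ reps : List RTree,
        reps.length = [1, 1, 2, 4, 9, 20, 48].getD (k - 1) 0 ∧
        (∀ r ∈ reps, r ∈ RTree.terms k) ∧
        reps.Pairwise (fun a b => ¬ RTree.Equiv a b) ∧
        (∀ t ∈ RTree.terms k, ∃ r ∈ reps, RTree.Equiv t r) := by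
  intro k h1 h7
  interval_cases k
  · exact RTree.key 1 _ RTree.reps1 (by decide) (by decide) (by decide) (by decide) (by decide)
  · exact RTree.key 2 _ RTree.reps2 (by decide) (by decide) (by decide) (by decide) (by decide)
  · exact RTree.key 3 _ RTree.reps3 (by decide) (by decide) (by decide) (by decide) (by decide)
  · exact RTree.key 4 _ RTree.reps4 (by decide) (by decide) (by decide) (by decide) (by decide)
  · exact RTree.key 5 _ RTree.reps5 (by decide) (by decide) (by decide) (by decide) (by decide)
  · exact RTree.key 6 _ RTree.reps6 (by decide) (by decide) (by decide) (by decide) (by decide)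
  · refine RTree.key 7 _ RTree.reps7 ?_ (by decide) ?_ (by decide) ?_
    · intro t ht
      have h : ∀ s ∈ RTree.terms 6, ∀ u ∈ RTree.grow s, RTree.size' u = 7 := by decide
      rw [show RTree.terms 7 = (RTree.terms 6).flatMap RTree.grow from rfl,
        List.mem_flatMap] at ht
      obtain ⟨s, hs, hts⟩ := ht
      exact h s hs t hts
    · intro r hr
      have h : ∀ r ∈ RTree.reps7, ∃ s ∈ RTree.terms 6, r ∈ RTree.grow s := by decide
      obtain ⟨s, hs, hrs⟩ := h r hr
      rw [show RTree.terms 7 = (RTree.terms 6).flatMap RTree.grow from rfl]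
      exact List.mem_flatMap.mpr ⟨s, hs, hrs⟩
    · intro t ht
      have h : ∀ s ∈ RTree.terms 6, ∀ u ∈ RTree.grow s,
          ∃ r ∈ RTree.reps7, RTree.canon u = RTree.canon r := by decide
      rw [show RTree.terms 7 = (RTree.terms 6).flatMap RTree.grow from rfl,
        List.mem_flatMap] at ht
      obtain ⟨s, hs, hts⟩ := ht
      exact h s hs t hts
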